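/- Let m ≥ 1 be an integer, ρ_i, ζ_j ∈ ℂ and μ_{i,j}, ν_{i,j} ∈ ℂ for 1 ≤ i < j ≤ m. Set S = Σ_{i<j} ρ_i (E_{ii} ⊗ₖ E_{jj}) + μ_{i,j} (E_{ji} ⊗ₖ E_{ij}) and T = Σ_{i<j} ζ_j (E_{ii} ⊗ₖ E_{jj}) + ν_{i,j} (E_{ji} ⊗ₖ E_{ij}), both complex matrices indexed by Fin m × Fin m. Then ρ_i ν_{i,j} = μ_{i,j} ζ_j for all 1 ≤ i < j ≤ m if and only if T·S = S·T. -/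

import Mathlib

open Matrix Kronecker

/-- `S ⊗ₖ 1ₘ`, reindexed to act on `ℂ^m ⊗ ℂ^m ⊗ ℂ^m`. -/
noncomputable def kron12 {m : ℕ} (S : Matrix (Fin m × Fin m) (Fin m × Fin m) ℂ) :
    Matrix (Fin m × Fin m × Fin m) (Fin m × Fin m × Fin m) ℂ :=
  Matrix.reindex (Equiv.prodAssoc (Fin m) (Fin m) (Fin m))
    (Equiv.prodAssoc (Fin m) (Fin m) (Fin m)) (S ⊗ₖ (1 : Matrix (Fin m) (Fin m) ℂ))

/-- `1ₘ ⊗ₖ S`, acting on `ℂ^m ⊗ ℂ^m ⊗ ℂ^m`. -/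
noncomputable def kron23 {m : ℕ} (S : Matrix (Fin m × Fin m) (Fin m × Fin m) ℂ) :
    Matrix (Fin m × Fin m × Fin m) (Fin m × Fin m × Fin m) ℂ :=
  (1 : Matrix (Fin m) (Fin m) ℂ) ⊗ₖ S

/-- The matrix `Σ_{i<j} ρ_i E_ii ⊗ E_jj + μ_{i,j} E_ji ⊗ E_ij` of
Proposition 4 (representation of the braid-like algebra `S_n`). -/
noncomputable def repS (m : ℕ) (ρ : Fin m → ℂ) (μ : Fin m → Fin m → ℂ) :
    Matrix (Fin m × Fin m) (Fin m × Fin m) ℂ :=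
  ∑ i : Fin m, ∑ j : Fin m,
    if i < j then
      ρ i • (Matrix.single i i (1 : ℂ) ⊗ₖ Matrix.single j j (1 : ℂ)) +
      μ i j • (Matrix.single j i (1 : ℂ) ⊗ₖ Matrix.single i j (1 : ℂ))
    else 0

/-- The matrix `Σ_{i<j} ζ_j E_ii ⊗ E_jj + ν_{i,j} E_ji ⊗ E_ij` of
Proposition 5 (representation of the braid-like algebra `T_n`). -/
noncomputable def repT (m : ℕ) (ζ : Fin m → ℂ) (ν : Fin m → Fin m → ℂ) :
    Matrix (Fin m × Fin m) (Fin m × Fin m) ℂ :=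
  ∑ i : Fin m, ∑ j : Fin m,
    if i < j then
      ζ j • (Matrix.single i i (1 : ℂ) ⊗ₖ Matrix.single j j (1 : ℂ)) +
      ν i j • (Matrix.single j i (1 : ℂ) ⊗ₖ Matrix.single i j (1 : ℂ))
    else 0

/-- Entrywise description of a matrix of the common shape of `repS` and `repT`. -/
lemma rep_apply {m : ℕ} (f g : Fin m → Fin m → ℂ) (a b c d : Fin m) :
    (∑ i : Fin m, ∑ j : Fin m,
      if i < j then
        f i j • (Matrix.single i i (1 : ℂ) ⊗ₖ Matrix.single j j (1 : ℂ)) +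
        g i j • (Matrix.single j i (1 : ℂ) ⊗ₖ Matrix.single i j (1 : ℂ))
      else 0) (a,b) (c,d) =
      (if a < b ∧ a = c ∧ b = d then f a b else 0) +
      (if b < a ∧ b = c ∧ a = d then g b a else 0) := by
  simp only [Matrix.sum_apply,
    apply_ite (fun M : Matrix (Fin m × Fin m) (Fin m × Fin m) ℂ => M (a,b) (c,d)),
    Matrix.add_apply, Matrix.smul_apply, Matrix.kroneckerMap_apply, Matrix.single,
    Matrix.of_apply, Matrix.zero_apply, smul_eq_mul]
  have key : ∀ i j : Fin m,
      (if i < j then f i j * ((if i = a ∧ i = c then (1:ℂ) else 0) * if j = b ∧ j = d then (1:ℂ) else 0) +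
        g i j * ((if j = a ∧ i = c then (1:ℂ) else 0) * if i = b ∧ j = d then (1:ℂ) else 0) else 0)
      = ((if i < j ∧ i = a ∧ i = c ∧ j = b ∧ j = d then f i j else 0) +
         (if i < j ∧ j = a ∧ i = c ∧ i = b ∧ j = d then g i j else 0)) := by
    intro i j
    by_cases h : i < j <;>
      simp [h, ite_and, mul_ite, apply_ite (f i j * ·), apply_ite (g i j * ·)] <;>
      split_ifs <;> ring
  simp only [key, Finset.sum_add_distrib]
  congr 1
  · rcases eq_or_ne a c with rfl | hac
    · rcases eq_or_ne b d with rfl | hbd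
      · simp [ite_and, Finset.sum_ite_eq', and_comm]
      · simp [ite_and, hbd, Ne.symm hbd, Finset.sum_ite_eq']
        exact Finset.sum_eq_zero fun x _ => Finset.sum_eq_zero fun y _ => by
          split_ifs <;> simp_all
    · simp [ite_and, hac, Ne.symm hac, Finset.sum_ite_eq']
      exact Finset.sum_eq_zero fun x _ => Finset.sum_eq_zero fun y _ => by
        split_ifs <;> simp_all
  · rcases eq_or_ne b c with rfl | hbc
    · rcases eq_or_ne a d with rfl | had
      · simp [ite_and, Finset.sum_ite_eq', and_comm]
      · simp [ite_and, had, Ne.symm had, Finset.sum_ite_eq']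
        exact Finset.sum_eq_zero fun x _ => Finset.sum_eq_zero fun y _ => by
          split_ifs <;> simp_all
    · simp [ite_and, hbc, Ne.symm hbc, Finset.sum_ite_eq']
      exact Finset.sum_eq_zero fun x _ => Finset.sum_eq_zero fun y _ => by
        split_ifs <;> simp_all

lemma repS_apply (m : ℕ) (ρ : Fin m → ℂ) (μ : Fin m → Fin m → ℂ) (a b c d : Fin m) :
    repS m ρ μ (a,b) (c,d) =
      (if a < b ∧ a = c ∧ b = d then ρ a else 0) +
      (if b < a ∧ b = c ∧ a = d then μ b a else 0) :=
  rep_apply (fun i _ => ρ i) μ a b c d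

lemma repT_apply (m : ℕ) (ζ : Fin m → ℂ) (ν : Fin m → Fin m → ℂ) (a b c d : Fin m) :
    repT m ζ ν (a,b) (c,d) =
      (if a < b ∧ a = c ∧ b = d then ζ b else 0) +
      (if b < a ∧ b = c ∧ a = d then ν b a else 0) :=
  rep_apply (fun _ j => ζ j) ν a b c d

/-- Entries of a product of two matrices of the common shape. -/
lemma mul_entry {m : ℕ} (A B : Matrix (Fin m × Fin m) (Fin m × Fin m) ℂ)
    (p q p' q' : Fin m → Fin m → ℂ)
    (hA : ∀ a b c d : Fin m, A (a,b) (c,d) =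
      (if a < b ∧ a = c ∧ b = d then p a b else 0) +
      (if b < a ∧ b = c ∧ a = d then q b a else 0))
    (hB : ∀ a b c d : Fin m, B (a,b) (c,d) =
      (if a < b ∧ a = c ∧ b = d then p' a b else 0) +
      (if b < a ∧ b = c ∧ a = d then q' b a else 0))
    (a b c d : Fin m) :
    (A * B) (a,b) (c,d) =
      (if a < b ∧ a = c ∧ b = d then p a b * p' a b else 0) +
      (if b < a ∧ b = c ∧ a = d then q b a * p' b a else 0) := by
  rw [Matrix.mul_apply, Fintype.sum_prod_type]
  have key : ∀ e f : Fin m, A (a,b) (e,f) * B (e,f) (c,d) =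
      (if e = a ∧ f = b ∧ a < b ∧ a = c ∧ b = d then p a b * p' a b else 0) +
      (if e = b ∧ f = a ∧ b < a ∧ b = c ∧ a = d then q b a * p' b a else 0) := by
    intro e f
    rw [hA, hB]
    clear hA hB
    split_ifs <;> (try casesm* _ ∧ _) <;> subst_vars <;> first
      | ring1
      | (exfalso; exact absurd ‹_ < _› (lt_irrefl _))
      | (exfalso; exact absurd ‹_ < _› (lt_asymm ‹_ < _›))
      | simp_all
  simp only [key, Finset.sum_add_distrib]
  congr 1 <;>
  · rw [Finset.sum_comm]
    simp [ite_and, Finset.sum_ite_eq', Finset.sum_ite_eq]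

/-- The compatibility conditions `ρ_i ν_{i,j} = μ_{i,j} ζ_j` (for `i < j`) of
the product-R-matrix theorem hold if and only if `TS = ST`. -/
theorem compat_iff_commute (m : ℕ) (hm : 1 ≤ m)
    (ρ ζ : Fin m → ℂ) (μ ν : Fin m → Fin m → ℂ) :
    (∀ i j : Fin m, i < j → ρ i * ν i j = μ i j * ζ j) ↔
      repT m ζ ν * repS m ρ μ = repS m ρ μ * repT m ζ ν := by
  have hTS := mul_entry (repT m ζ ν) (repS m ρ μ) (fun _ j => ζ j) ν (fun i _ => ρ i) μ
    (repT_apply m ζ ν) (repS_apply m ρ μ)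
  have hST := mul_entry (repS m ρ μ) (repT m ζ ν) (fun i _ => ρ i) μ (fun _ j => ζ j) ν
    (repS_apply m ρ μ) (repT_apply m ζ ν)
  constructor
  · intro h
    ext ⟨a, b⟩ ⟨c, d⟩
    rw [hTS a b c d, hST a b c d]
    congr 1
    · split_ifs <;> ring
    · split_ifs with hc
      · have := h b a hc.1
        linear_combination this
      · rfl
  · intro h i j hij
    have h2 := congrFun (congrFun h (j, i)) (i, j)
    rw [hTS j i i j, hST j i i j] at h2
    simp only [hij, not_lt_of_gt hij, false_and, if_false, and_self, if_true, zero_add] at h2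
    have h3 : ν i j * ρ i = μ i j * ζ j := by
      by_cases hji : j < i
      · exact absurd hij (not_lt_of_gt hji)
      · simpa [hij, hji] using h2
    linear_combination h3
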